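/- Assume that no proper subgroup of ℤ^d contains P = {u ∈ ℤ^d : p(u) > 0}. If α : ℤ^d → (0,1) is such that ν_α is stationary for the translation-invariant exclusion process on ℤ^d, then there exists v ∈ ℝ^d such that π(x) = π(0)·e^{⟨x,v⟩} for all x ∈ ℤ^d. -/

import Mathlib

open MeasureTheory Filter Topology

namespace ExclusionPaper

abbrev Zd (d : ℕ) := Fin d → ℤ

abbrev Conf (d : ℕ) := Zd d → Bool

noncomputable def ind (b : Bool) : ℝ := if b then 1 else 0

def swap {d : ℕ} (η : Conf d) (x y : Zd d) : Conf d :=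
  fun z => if z = x then η y else if z = y then η x else η z

def IsCylinder {d : ℕ} (f : Conf d → ℝ) : Prop :=
  ∃ F : Finset (Zd d), ∀ η η' : Conf d, (∀ x ∈ F, η x = η' x) → f η = f η'

noncomputable def gen {d : ℕ} (p : Zd d → ℝ) (f : Conf d → ℝ) (η : Conf d) : ℝ :=
  ∑' x : Zd d, ∑' y : Zd d,
    p (y - x) * ind (η x) * (1 - ind (η y)) * (f (swap η x y) - f η)

def IsStationary {d : ℕ} (p : Zd d → ℝ) (μ : Measure (Conf d)) : Prop :=
  ∀ f : Conf d → ℝ, IsCylinder f → ∫ η, gen p f η ∂μ = 0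

def IsProductWith {d : ℕ} (α : Zd d → ℝ) (μ : Measure (Conf d)) : Prop :=
  IsProbabilityMeasure μ ∧
  ∀ F : Finset (Zd d), ∀ b : Zd d → Bool,
    μ {η : Conf d | ∀ x ∈ F, η x = b x} =
      ∏ x ∈ F, ENNReal.ofReal (if b x then α x else 1 - α x)

noncomputable def pifun {d : ℕ} (α : Zd d → ℝ) (x : Zd d) : ℝ := α x / (1 - α x)

def innerZ {d : ℕ} (x y : Zd d) : ℤ := ∑ i, x i * y i

noncomputable def innerR {d : ℕ} (x : Zd d) (v : Fin d → ℝ) : ℝ := ∑ i, (x i : ℝ) * v i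
/-! ### Basic lemmas -/

lemma ind_nonneg (b : Bool) : 0 ≤ ind b := by cases b <;> norm_num [ind]

lemma ind_le_one (b : Bool) : ind b ≤ 1 := by cases b <;> norm_num [ind]

lemma ind_mul_one_sub (b : Bool) : ind b * (1 - ind b) = 0 := by cases b <;> norm_num [ind]

lemma measurable_indApply {d : ℕ} (x : Zd d) : Measurable fun η : Conf d => ind (η x) := by
  have h1 : Measurable ind := measurable_from_top
  exact h1.comp (measurable_pi_apply x)

lemma measurableSet_eq {d : ℕ} (x : Zd d) (b : Bool) :
    MeasurableSet {η : Conf d | η x = b} := by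
  have : {η : Conf d | η x = b} = (fun η : Conf d => η x) ⁻¹' {b} := rfl
  rw [this]; exact measurable_pi_apply x (measurableSet_singleton b)

section Main

variable {d : ℕ} {p : Zd d → ℝ} {α : Zd d → ℝ} {μ : Measure (Conf d)}

lemma summable_p (hp0 : ∀ z, 0 ≤ p z) (hp1 : ∑' z : Zd d, p z = 1) : Summable p := by
  by_contra h
  rw [tsum_eq_zero_of_not_summable h] at hp1
  norm_num at hp1

/-! ### Integrals of patterns -/

lemma indicator_two {x y : Zd d} (hxy : x ≠ y) :
    (fun η : Conf d => ind (η x) * (1 - ind (η y))) =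
      ({η : Conf d | η x = true} ∩ {η : Conf d | η y = false}).indicator (fun _ => (1:ℝ)) := by
  funext η
  by_cases hx : η x = true <;> by_cases hy : η y = false <;>
    simp [Set.indicator, hx, hy, ind] <;> simp_all [ind]

lemma integral_two (hμ : IsProductWith α μ) (hα : ∀ x, α x ∈ Set.Ioo (0:ℝ) 1)
    {x y : Zd d} (hxy : x ≠ y) :
    ∫ η, ind (η x) * (1 - ind (η y)) ∂μ = α x * (1 - α y) := by
  haveI : IsProbabilityMeasure μ := hμ.1
  have hS : MeasurableSet ({η : Conf d | η x = true} ∩ {η : Conf d | η y = false}) :=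
    (measurableSet_eq x true).inter (measurableSet_eq y false)
  rw [indicator_two hxy, integral_indicator_const (1:ℝ) hS]
  have hset : ({η : Conf d | η x = true} ∩ {η : Conf d | η y = false}) =
      {η : Conf d | ∀ t ∈ ({x, y} : Finset (Zd d)), η t = (decide (t = x) : Bool)} := by
    ext η
    simp only [Set.mem_inter_iff, Set.mem_setOf_eq, Finset.mem_insert, Finset.mem_singleton]
    constructor
    · rintro ⟨h1, h2⟩ t ht
      rcases ht with rfl | rfl
      · simpa using h1
      · simp [hxy.symm, h2]
    · intro h
      constructor
      · simpa using h x (Or.inl rfl)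
      · simpa [hxy.symm] using h y (Or.inr rfl)
  rw [hset, measureReal_def, hμ.2, Finset.prod_pair hxy]
  have h1 : (if (decide (x = x) : Bool) then α x else 1 - α x) = α x := by simp
  have h2 : (if (decide (y = x) : Bool) then α y else 1 - α y) = 1 - α y := by simp [hxy.symm]
  rw [h1, h2, ENNReal.toReal_mul, ENNReal.toReal_ofReal (le_of_lt (hα x).1),
    ENNReal.toReal_ofReal (by linarith [(hα y).2] : (0:ℝ) ≤ 1 - α y)]
  simp

lemma indicator_three {x y z : Zd d} (hxy : x ≠ y) (hxz : x ≠ z) (hyz : y ≠ z) :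
    (fun η : Conf d => ind (η x) * (1 - ind (η y)) * ind (η z)) =
      (({η : Conf d | η x = true} ∩ {η : Conf d | η y = false}) ∩
        {η : Conf d | η z = true}).indicator (fun _ => (1:ℝ)) := by
  funext η
  by_cases hx : η x = true <;> by_cases hy : η y = false <;> by_cases hz : η z = true <;>
    simp [Set.indicator, hx, hy, hz, ind] <;> simp_all [ind]

lemma integral_three (hμ : IsProductWith α μ) (hα : ∀ x, α x ∈ Set.Ioo (0:ℝ) 1)
    {x y z : Zd d} (hxy : x ≠ y) (hxz : x ≠ z) (hyz : y ≠ z) :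
    ∫ η, ind (η x) * (1 - ind (η y)) * ind (η z) ∂μ = α x * (1 - α y) * α z := by
  haveI : IsProbabilityMeasure μ := hμ.1
  have hS : MeasurableSet (({η : Conf d | η x = true} ∩ {η : Conf d | η y = false}) ∩
      {η : Conf d | η z = true}) :=
    ((measurableSet_eq x true).inter (measurableSet_eq y false)).inter (measurableSet_eq z true)
  rw [indicator_three hxy hxz hyz, integral_indicator_const (1:ℝ) hS]
  have hset : (({η : Conf d | η x = true} ∩ {η : Conf d | η y = false}) ∩
      {η : Conf d | η z = true}) =
      {η : Conf d | ∀ t ∈ ({x, y, z} : Finset (Zd d)), η t = (decide (t ≠ y) : Bool)} := by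
    ext η
    simp only [Set.mem_inter_iff, Set.mem_setOf_eq, Finset.mem_insert, Finset.mem_singleton]
    constructor
    · rintro ⟨⟨h1, h2⟩, h3⟩ t ht
      rcases ht with rfl | rfl | rfl
      · simp [hxy, h1]
      · simp [h2]
      · simp [hyz.symm, h3]
    · intro h
      refine ⟨⟨?_, ?_⟩, ?_⟩
      · simpa [hxy] using h x (Or.inl rfl)
      · simpa using h y (Or.inr (Or.inl rfl))
      · simpa [hyz.symm] using h z (Or.inr (Or.inr rfl))
  have hxmem : x ∉ ({y, z} : Finset (Zd d)) := by simp [hxy, hxz]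
  have hymem : y ∉ ({z} : Finset (Zd d)) := by simp [hyz]
  rw [hset, measureReal_def, hμ.2, Finset.prod_insert hxmem, Finset.prod_insert hymem, Finset.prod_singleton]
  have h1 : (if (decide (x ≠ y) : Bool) then α x else 1 - α x) = α x := by simp [hxy]
  have h2 : (if (decide (y ≠ y) : Bool) then α y else 1 - α y) = 1 - α y := by simp
  have h3 : (if (decide (z ≠ y) : Bool) then α z else 1 - α z) = α z := by simp [hyz.symm]
  rw [h1, h2, h3, ENNReal.toReal_mul, ENNReal.toReal_mul,
    ENNReal.toReal_ofReal (le_of_lt (hα x).1),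
    ENNReal.toReal_ofReal (by linarith [(hα y).2] : (0:ℝ) ≤ 1 - α y),
    ENNReal.toReal_ofReal (le_of_lt (hα z).1)]
  simp; ring

/-! ### misc bounds -/

lemma ind2_nonneg (b c : Bool) : 0 ≤ ind b * (1 - ind c) := by
  cases b <;> cases c <;> norm_num [ind]

lemma ind2_le_one (b c : Bool) : ind b * (1 - ind c) ≤ 1 := by
  cases b <;> cases c <;> norm_num [ind]

lemma lintegral_norm_le [IsProbabilityMeasure μ] {f : Conf d → ℝ} {c : ℝ}
    (h : ∀ η, ‖f η‖ ≤ c) : ∫⁻ η, ‖f η‖₊ ∂μ ≤ ENNReal.ofReal c := by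
  calc ∫⁻ η, ‖f η‖₊ ∂μ ≤ ∫⁻ _, ENNReal.ofReal c ∂μ := by
        apply lintegral_mono; intro η
        simp only []
        rw [← ENNReal.ofReal_coe_nnreal, coe_nnnorm]; exact ENNReal.ofReal_le_ofReal (h η)
    _ = ENNReal.ofReal c := by simp

lemma integrable_two [IsProbabilityMeasure μ] {x y : Zd d} (hxy : x ≠ y) :
    Integrable (fun η : Conf d => ind (η x) * (1 - ind (η y))) μ := by
  rw [indicator_two hxy]
  exact (integrable_const (1:ℝ)).indicator
    ((measurableSet_eq x true).inter (measurableSet_eq y false))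

lemma integrable_three [IsProbabilityMeasure μ] {x y z : Zd d}
    (hxy : x ≠ y) (hxz : x ≠ z) (hyz : y ≠ z) :
    Integrable (fun η : Conf d => ind (η x) * (1 - ind (η y)) * ind (η z)) μ := by
  rw [indicator_three hxy hxz hyz]
  exact (integrable_const (1:ℝ)).indicator
    (((measurableSet_eq x true).inter (measurableSet_eq y false)).inter
      (measurableSet_eq z true))

/-! ### One-point equation -/

lemma eqOne (hp0 : ∀ z, 0 ≤ p z) (hp1 : ∑' z : Zd d, p z = 1)
    (hα : ∀ x, α x ∈ Set.Ioo (0:ℝ) 1) (hμ : IsProductWith α μ) (hstat : IsStationary p μ)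
    (a : Zd d) :
    ∑' y : Zd d, (if y = a then 0 else p (a - y) * (α y * (1 - α a))) =
    ∑' y : Zd d, (if y = a then 0 else p (y - a) * (α a * (1 - α y))) := by
  classical
  haveI : IsProbabilityMeasure μ := hμ.1
  have hsump : Summable p := summable_p hp0 hp1
  have hs1 : Summable fun y : Zd d => p (a - y) :=
    hsump.comp_injective (sub_right_injective)
  have hs2 : Summable fun y : Zd d => p (y - a) :=
    hsump.comp_injective (sub_left_injective)
  set f₁ : Conf d → ℝ := fun η => ind (η a) with hf₁
  have hcyl : IsCylinder f₁ := ⟨{a}, fun η η' h => by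
    simp [hf₁, h a (Finset.mem_singleton_self a)]⟩
  set H : Zd d → Conf d → ℝ := fun y η =>
    (if y = a then 0 else p (a - y) * (ind (η y) * (1 - ind (η a))))
      - p (y - a) * (ind (η a) * (1 - ind (η y))) with hH
  -- pointwise identity
  have hgenpt : ∀ η, gen p f₁ η = ∑' y, H y η := by
    intro η
    have hΨs : Summable fun y => p (y - a) * (ind (η a) * (1 - ind (η y))) := by
      apply Summable.of_nonneg_of_le
        (fun y => mul_nonneg (hp0 _) (ind2_nonneg _ _))
        (fun y => mul_le_of_le_one_right (hp0 _) (ind2_le_one _ _)) hs2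
    have hCs : Summable fun x =>
        (if x = a then 0 else p (a - x) * (ind (η x) * (1 - ind (η a)))) := by
      refine Summable.of_nonneg_of_le (fun x => ?_) (fun x => ?_) hs1
      · by_cases hx : x = a
        · simp [hx]
        · simp only [if_neg hx]
          exact mul_nonneg (hp0 _) (ind2_nonneg _ _)
      · by_cases hx : x = a
        · simp [hx, hp0]
        · simp only [if_neg hx]
          exact mul_le_of_le_one_right (hp0 _) (ind2_le_one _ _)
    have hIa : (∑' y, p (y - a) * ind (η a) * (1 - ind (η y)) * (f₁ (swap η a y) - f₁ η))
        = -∑' y, p (y - a) * (ind (η a) * (1 - ind (η y))) := by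
      rw [← tsum_neg]
      apply tsum_congr; intro y
      have hsw : swap η a y a = η y := by simp [swap]
      simp only [hf₁, hsw]
      cases hb : η a <;> cases hc : η y <;> simp [ind] <;> ring
    have hIx : ∀ x, x ≠ a →
        (∑' y, p (y - x) * ind (η x) * (1 - ind (η y)) * (f₁ (swap η x y) - f₁ η))
        = p (a - x) * (ind (η x) * (1 - ind (η a))) := by
      intro x hx
      rw [tsum_eq_single a ?_]
      · have hsw : swap η x a a = η x := by simp [swap, Ne.symm hx]
        simp only [hf₁, hsw]
        cases hb : η x <;> cases hc : η a <;> simp [ind] <;> ring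
      · intro y hy
        have hsw : swap η x y a = η a := by
          simp [swap, Ne.symm hx, Ne.symm hy]
        simp [hf₁, hsw]
    set Ψ : ℝ := ∑' y, p (y - a) * (ind (η a) * (1 - ind (η y))) with hΨ
    calc gen p f₁ η
        = ∑' x, ((if x = a then 0 else p (a - x) * (ind (η x) * (1 - ind (η a))))
            + (if x = a then -Ψ else 0)) := by
          rw [show gen p f₁ η = ∑' x, ∑' y,
            p (y - x) * ind (η x) * (1 - ind (η y)) * (f₁ (swap η x y) - f₁ η) from rfl]
          apply tsum_congr; intro x
          by_cases hx : x = a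
          · subst hx
            rw [hIa]
            simp
          · simp only [if_neg hx]
            rw [hIx x hx]; ring
      _ = ∑' x, (if x = a then 0 else p (a - x) * (ind (η x) * (1 - ind (η a))))
            + ∑' x, (if x = a then -Ψ else 0) :=
          hCs.tsum_add ((hasSum_ite_eq a (-Ψ)).summable)
      _ = ∑' x, (if x = a then 0 else p (a - x) * (ind (η x) * (1 - ind (η a)))) - Ψ := by
          rw [tsum_ite_eq]; ring
      _ = ∑' y, H y η := by
          rw [hH, hCs.tsum_sub hΨs]
  -- measurability
  have hmeas : ∀ y, AEStronglyMeasurable (H y) μ := by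
    intro y
    have : Measurable (H y) := by
      apply Measurable.sub
      · by_cases hy : y = a
        · simp only [hH, if_pos hy]; exact measurable_const
        · simp only [hH, if_neg hy]
          exact (((measurable_indApply y).mul
            (measurable_const.sub (measurable_indApply a)))).const_mul _
      · exact (((measurable_indApply a).mul
          (measurable_const.sub (measurable_indApply y)))).const_mul _
    exact this.aestronglyMeasurable
  -- bound
  have hbound : ∀ y η, ‖H y η‖ ≤ p (a - y) + p (y - a) := by
    intro y η
    have h1 : ∀ c : ℝ, (if y = a then 0 else p (a - y) * (ind (η y) * (1 - ind (η a)))) = c → |c| ≤ p (a - y) := by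
      intro c hc
      by_cases hy : y = a
      · simp [hy] at hc; simp [← hc, hp0]
      · simp only [if_neg hy] at hc
        rw [← hc, abs_of_nonneg (mul_nonneg (hp0 _) (ind2_nonneg _ _))]
        exact mul_le_of_le_one_right (hp0 _) (ind2_le_one _ _)
    have h2 : |p (y - a) * (ind (η a) * (1 - ind (η y)))| ≤ p (y - a) := by
      rw [abs_of_nonneg (mul_nonneg (hp0 _) (ind2_nonneg _ _))]
      exact mul_le_of_le_one_right (hp0 _) (ind2_le_one _ _)
    calc ‖H y η‖ ≤ |(if y = a then 0 else p (a - y) * (ind (η y) * (1 - ind (η a))))|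
          + |p (y - a) * (ind (η a) * (1 - ind (η y)))| := abs_sub _ _
      _ ≤ p (a - y) + p (y - a) := add_le_add (h1 _ rfl) h2
  have hlint : (∑' y, ∫⁻ η, ‖H y η‖₊ ∂μ) ≠ ⊤ := by
    have h1 : ∀ y : Zd d, ∫⁻ η, ‖H y η‖₊ ∂μ ≤ ENNReal.ofReal (p (a - y) + p (y - a)) :=
      fun y => lintegral_norm_le (hbound y)
    have h2 := ENNReal.tsum_le_tsum h1
    have h3 : (∑' y : Zd d, ENNReal.ofReal (p (a - y) + p (y - a)))
        = ENNReal.ofReal (∑' y : Zd d, (p (a - y) + p (y - a))) :=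
      (ENNReal.ofReal_tsum_of_nonneg (fun y => add_nonneg (hp0 _) (hp0 _)) (hs1.add hs2)).symm
    rw [h3] at h2
    exact (lt_of_le_of_lt h2 ENNReal.ofReal_lt_top).ne
  -- integrate
  have h0 : (0:ℝ) = ∑' y, ∫ η, H y η ∂μ := by
    rw [← integral_tsum hmeas hlint, ← integral_congr_ae (Filter.Eventually.of_forall hgenpt),
      hstat f₁ hcyl]
  have hint : ∀ y, ∫ η, H y η ∂μ =
      (if y = a then 0 else p (a - y) * (α y * (1 - α a)))
        - (if y = a then 0 else p (y - a) * (α a * (1 - α y))) := by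
    intro y
    by_cases hy : y = a
    · subst hy
      have hz : ∀ η, H y η = 0 := fun η => by
        simp [hH, ind_mul_one_sub]
      rw [integral_congr_ae (Filter.Eventually.of_forall hz)]
      simp
    · simp only [hH, if_neg hy]
      have hint1 : Integrable (fun η : Conf d =>
          p (a - y) * (ind (η y) * (1 - ind (η a)))) μ := (integrable_two hy).const_mul _
      have hint2 : Integrable (fun η : Conf d =>
          p (y - a) * (ind (η a) * (1 - ind (η y)))) μ :=
        (integrable_two (Ne.symm hy)).const_mul _
      rw [integral_sub hint1 hint2, integral_const_mul, integral_const_mul,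
        integral_two hμ hα hy, integral_two hμ hα (Ne.symm hy)]
  rw [tsum_congr hint] at h0
  have hCs' : Summable fun y => (if y = a then 0 else p (a - y) * (α y * (1 - α a))) := by
    refine Summable.of_nonneg_of_le (fun y => ?_) (fun y => ?_) hs1
    · by_cases hy : y = a
      · simp [hy]
      · simp only [if_neg hy]
        exact mul_nonneg (hp0 _) (mul_nonneg (hα y).1.le (by linarith [(hα a).2]))
    · by_cases hy : y = a
      · simp [hy, hp0]
      · simp only [if_neg hy]
        refine mul_le_of_le_one_right (hp0 _) ?_
        have h1 := (hα y).1; have h2 := (hα y).2; have h3 := (hα a).1; have h4 := (hα a).2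
        nlinarith
  have hDs' : Summable fun y => (if y = a then 0 else p (y - a) * (α a * (1 - α y))) := by
    refine Summable.of_nonneg_of_le (fun y => ?_) (fun y => ?_) hs2
    · by_cases hy : y = a
      · simp [hy]
      · simp only [if_neg hy]
        exact mul_nonneg (hp0 _) (mul_nonneg (hα a).1.le (by linarith [(hα y).2]))
    · by_cases hy : y = a
      · simp [hy, hp0]
      · simp only [if_neg hy]
        refine mul_le_of_le_one_right (hp0 _) ?_
        have h1 := (hα y).1; have h2 := (hα y).2; have h3 := (hα a).1; have h4 := (hα a).2
        nlinarith
  rw [hCs'.tsum_sub hDs'] at h0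
  linarith [h0]

lemma ind3_nonneg (b c e : Bool) : 0 ≤ ind b * (1 - ind c) * ind e := by
  cases b <;> cases c <;> cases e <;> norm_num [ind]

lemma ind3_le_one (b c e : Bool) : ind b * (1 - ind c) * ind e ≤ 1 := by
  cases b <;> cases c <;> cases e <;> norm_num [ind]

lemma summable_ite_of_le {P : Zd d → Prop} [DecidablePred P] {g B : Zd d → ℝ}
    (hB : Summable B) (h3 : ∀ y, 0 ≤ B y)
    (h1 : ∀ y, ¬ P y → 0 ≤ g y) (h2 : ∀ y, ¬ P y → g y ≤ B y) :
    Summable fun y => if P y then 0 else g y := by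
  refine Summable.of_nonneg_of_le (fun y => ?_) (fun y => ?_) hB
  · by_cases h : P y
    · simp [h]
    · simpa [h] using h1 y h
  · by_cases h : P y
    · simpa [h] using h3 y
    · simpa [h] using h2 y h

/-! ### Two-point equation -/

lemma eqTwo (hp0 : ∀ z, 0 ≤ p z) (hp1 : ∑' z : Zd d, p z = 1)
    (hα : ∀ x, α x ∈ Set.Ioo (0:ℝ) 1) (hμ : IsProductWith α μ) (hstat : IsStationary p μ)
    (a b : Zd d) (hab : a ≠ b) :
    ∑' y : Zd d, (if y = a ∨ y = b then 0 else
        p (a - y) * (α y * (1 - α a) * α b) + p (b - y) * (α y * (1 - α b) * α a)) =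
    ∑' y : Zd d, (if y = a ∨ y = b then 0 else
        p (y - a) * (α a * (1 - α y) * α b) + p (y - b) * (α b * (1 - α y) * α a)) := by
  classical
  haveI : IsProbabilityMeasure μ := hμ.1
  have hsump : Summable p := summable_p hp0 hp1
  have hsa1 : Summable fun y : Zd d => p (a - y) := hsump.comp_injective sub_right_injective
  have hsa2 : Summable fun y : Zd d => p (y - a) := hsump.comp_injective sub_left_injective
  have hsb1 : Summable fun y : Zd d => p (b - y) := hsump.comp_injective sub_right_injective
  have hsb2 : Summable fun y : Zd d => p (y - b) := hsump.comp_injective sub_left_injective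
  set f₂ : Conf d → ℝ := fun η => ind (η a) * ind (η b) with hf₂
  have hcyl : IsCylinder f₂ := ⟨{a, b}, fun η η' h => by
    simp [hf₂, h a (by simp), h b (by simp)]⟩
  set H : Zd d → Conf d → ℝ := fun y η =>
    (if y = a ∨ y = b then 0 else
        p (a - y) * (ind (η y) * (1 - ind (η a)) * ind (η b))
        + p (b - y) * (ind (η y) * (1 - ind (η b)) * ind (η a)))
      - (if y = b then 0 else p (y - a) * (ind (η a) * (1 - ind (η y)) * ind (η b)))
      - (if y = a then 0 else p (y - b) * (ind (η b) * (1 - ind (η y)) * ind (η a))) with hH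
  have hgenpt : ∀ η, gen p f₂ η = ∑' y, H y η := by
    intro η
    have hΨas : Summable (fun y =>
        (if y = b then 0 else p (y - a) * (ind (η a) * (1 - ind (η y)) * ind (η b)))) :=
      summable_ite_of_le hsa2 (fun y => hp0 _)
        (fun y _ => mul_nonneg (hp0 _) (ind3_nonneg _ _ _))
        (fun y _ => mul_le_of_le_one_right (hp0 _) (ind3_le_one _ _ _))
    have hΨbs : Summable (fun y =>
        (if y = a then 0 else p (y - b) * (ind (η b) * (1 - ind (η y)) * ind (η a)))) :=
      summable_ite_of_le hsb2 (fun y => hp0 _)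
        (fun y _ => mul_nonneg (hp0 _) (ind3_nonneg _ _ _))
        (fun y _ => mul_le_of_le_one_right (hp0 _) (ind3_le_one _ _ _))
    have hCs : Summable (fun x =>
        (if x = a ∨ x = b then 0 else
          p (a - x) * (ind (η x) * (1 - ind (η a)) * ind (η b))
          + p (b - x) * (ind (η x) * (1 - ind (η b)) * ind (η a)))) :=
      summable_ite_of_le (hsa1.add hsb1) (fun y => add_nonneg (hp0 _) (hp0 _))
        (fun y _ => add_nonneg (mul_nonneg (hp0 _) (ind3_nonneg _ _ _))
          (mul_nonneg (hp0 _) (ind3_nonneg _ _ _)))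
        (fun y _ => add_le_add (mul_le_of_le_one_right (hp0 _) (ind3_le_one _ _ _))
          (mul_le_of_le_one_right (hp0 _) (ind3_le_one _ _ _)))
    have hIa : (∑' y, p (y - a) * ind (η a) * (1 - ind (η y)) * (f₂ (swap η a y) - f₂ η))
        = -∑' y, (if y = b then 0 else
            p (y - a) * (ind (η a) * (1 - ind (η y)) * ind (η b))) := by
      rw [← tsum_neg]
      apply tsum_congr; intro y
      by_cases hyb : y = b
      · subst hyb
        have h1 : swap η a y a = η y := by simp [swap]
        have h2 : swap η a y y = η a := by simp [swap, Ne.symm hab]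
        rw [if_pos rfl]
        simp only [hf₂, h1, h2]
        ring
      · rw [if_neg hyb]
        have h1 : swap η a y a = η y := by simp [swap]
        have h2 : swap η a y b = η b := by simp [swap, Ne.symm hab, Ne.symm hyb]
        simp only [hf₂, h1, h2]
        cases η a <;> cases η y <;> cases η b <;> simp [ind] <;> ring
    have hIb : (∑' y, p (y - b) * ind (η b) * (1 - ind (η y)) * (f₂ (swap η b y) - f₂ η))
        = -∑' y, (if y = a then 0 else
            p (y - b) * (ind (η b) * (1 - ind (η y)) * ind (η a))) := by
      rw [← tsum_neg]
      apply tsum_congr; intro y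
      by_cases hya : y = a
      · subst hya
        have h1 : swap η b y b = η y := by simp [swap]
        have h2 : swap η b y y = η b := by simp [swap, hab]
        rw [if_pos rfl]
        simp only [hf₂, h1, h2]
        ring
      · rw [if_neg hya]
        have h1 : swap η b y b = η y := by simp [swap]
        have h2 : swap η b y a = η a := by simp [swap, hab, Ne.symm hya]
        simp only [hf₂, h1, h2]
        cases η a <;> cases η y <;> cases η b <;> simp [ind] <;> ring
    have hIx : ∀ x, ¬(x = a ∨ x = b) →
        (∑' y, p (y - x) * ind (η x) * (1 - ind (η y)) * (f₂ (swap η x y) - f₂ η))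
        = p (a - x) * (ind (η x) * (1 - ind (η a)) * ind (η b))
          + p (b - x) * (ind (η x) * (1 - ind (η b)) * ind (η a)) := by
      intro x hx
      push_neg at hx
      obtain ⟨hxa, hxb⟩ := hx
      rw [tsum_eq_sum (s := ({a, b} : Finset (Zd d))) ?_]
      · rw [Finset.sum_pair hab]
        have h1 : swap η x a a = η x := by simp [swap, Ne.symm hxa]
        have h2 : swap η x a b = η b := by simp [swap, Ne.symm hxb, Ne.symm hab]
        have h3 : swap η x b b = η x := by simp [swap, Ne.symm hxb]
        have h4 : swap η x b a = η a := by simp [swap, Ne.symm hxa, hab]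
        simp only [hf₂, h1, h2, h3, h4]
        cases η x <;> cases η a <;> cases η b <;> simp [ind] <;> ring
      · intro y hy
        simp only [Finset.mem_insert, Finset.mem_singleton] at hy
        push_neg at hy
        have h1 : swap η x y a = η a := by simp [swap, Ne.symm hxa, Ne.symm hy.1]
        have h2 : swap η x y b = η b := by simp [swap, Ne.symm hxb, Ne.symm hy.2]
        simp [hf₂, h1, h2]
    set Ψa : ℝ := ∑' y, (if y = b then 0 else
        p (y - a) * (ind (η a) * (1 - ind (η y)) * ind (η b))) with hΨa
    set Ψb : ℝ := ∑' y, (if y = a then 0 else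
        p (y - b) * (ind (η b) * (1 - ind (η y)) * ind (η a))) with hΨb
    calc gen p f₂ η
        = ∑' x, ((if x = a ∨ x = b then 0 else
              p (a - x) * (ind (η x) * (1 - ind (η a)) * ind (η b))
              + p (b - x) * (ind (η x) * (1 - ind (η b)) * ind (η a)))
            + ((if x = a then -Ψa else 0) + (if x = b then -Ψb else 0))) := by
          rw [show gen p f₂ η = ∑' x, ∑' y,
            p (y - x) * ind (η x) * (1 - ind (η y)) * (f₂ (swap η x y) - f₂ η) from rfl]
          apply tsum_congr; intro x
          by_cases hxa : x = a
          · subst hxa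
            rw [hIa]
            simp [hab]
          · by_cases hxb : x = b
            · subst hxb
              rw [hIb]
              simp [Ne.symm hab, hxa]
            · rw [hIx x (by tauto)]
              simp [hxa, hxb]
      _ = (∑' x, (if x = a ∨ x = b then 0 else
              p (a - x) * (ind (η x) * (1 - ind (η a)) * ind (η b))
              + p (b - x) * (ind (η x) * (1 - ind (η b)) * ind (η a))))
            + ∑' x, ((if x = a then -Ψa else 0) + (if x = b then -Ψb else 0)) :=
          hCs.tsum_add (((hasSum_ite_eq a (-Ψa)).summable).add
            ((hasSum_ite_eq b (-Ψb)).summable))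
      _ = (∑' x, (if x = a ∨ x = b then 0 else
              p (a - x) * (ind (η x) * (1 - ind (η a)) * ind (η b))
              + p (b - x) * (ind (η x) * (1 - ind (η b)) * ind (η a))))
            + (-Ψa + -Ψb) := by
          rw [((hasSum_ite_eq a (-Ψa)).summable).tsum_add
            ((hasSum_ite_eq b (-Ψb)).summable), tsum_ite_eq, tsum_ite_eq]
      _ = ∑' y, H y η := by
          rw [hH]
          rw [show (fun y => ((if y = a ∨ y = b then 0 else
              p (a - y) * (ind (η y) * (1 - ind (η a)) * ind (η b))
              + p (b - y) * (ind (η y) * (1 - ind (η b)) * ind (η a)))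
            - (if y = b then 0 else p (y - a) * (ind (η a) * (1 - ind (η y)) * ind (η b)))
            - (if y = a then 0 else p (y - b) * (ind (η b) * (1 - ind (η y)) * ind (η a)))))
            = fun y => (((if y = a ∨ y = b then 0 else
              p (a - y) * (ind (η y) * (1 - ind (η a)) * ind (η b))
              + p (b - y) * (ind (η y) * (1 - ind (η b)) * ind (η a)))
            - (if y = b then 0 else p (y - a) * (ind (η a) * (1 - ind (η y)) * ind (η b))))
            - (if y = a then 0 else p (y - b) * (ind (η b) * (1 - ind (η y)) * ind (η a))))
            from rfl]
          rw [(hCs.sub hΨas).tsum_sub hΨbs, hCs.tsum_sub hΨas]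
          ring
  have hmeas : ∀ y, AEStronglyMeasurable (H y) μ := by
    intro y
    have m3 : ∀ (u v w : Zd d) (c : ℝ), Measurable (fun η : Conf d =>
        c * (ind (η u) * (1 - ind (η v)) * ind (η w))) := fun u v w c =>
      (((measurable_indApply u).mul (measurable_const.sub (measurable_indApply v))).mul
        (measurable_indApply w)).const_mul c
    have : Measurable (H y) := by
      apply Measurable.sub
      apply Measurable.sub
      · by_cases hy : y = a ∨ y = b
        · simp only [hH, if_pos hy]; exact measurable_const
        · simp only [hH, if_neg hy]
          exact ((m3 y a b (p (a - y))).add (m3 y b a (p (b - y))))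
      · by_cases hy : y = b
        · simp only [hH, if_pos hy]; exact measurable_const
        · simp only [hH, if_neg hy]; exact m3 a y b (p (y - a))
      · by_cases hy : y = a
        · simp only [hH, if_pos hy]; exact measurable_const
        · simp only [hH, if_neg hy]; exact m3 b y a (p (y - b))
    exact this.aestronglyMeasurable
  have hbound : ∀ y η, ‖H y η‖ ≤ (p (a - y) + p (b - y)) + p (y - a) + p (y - b) := by
    intro y η
    have e1 : |(if y = a ∨ y = b then 0 else
        p (a - y) * (ind (η y) * (1 - ind (η a)) * ind (η b))
        + p (b - y) * (ind (η y) * (1 - ind (η b)) * ind (η a)))| ≤ p (a - y) + p (b - y) := by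
      by_cases hy : y = a ∨ y = b
      · simp [hy, add_nonneg (hp0 (a - y)) (hp0 (b - y))]
      · rw [if_neg hy, abs_of_nonneg (add_nonneg (mul_nonneg (hp0 _) (ind3_nonneg _ _ _))
          (mul_nonneg (hp0 _) (ind3_nonneg _ _ _)))]
        exact add_le_add (mul_le_of_le_one_right (hp0 _) (ind3_le_one _ _ _))
          (mul_le_of_le_one_right (hp0 _) (ind3_le_one _ _ _))
    have e2 : |(if y = b then 0 else
        p (y - a) * (ind (η a) * (1 - ind (η y)) * ind (η b)))| ≤ p (y - a) := by
      by_cases hy : y = b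
      · simp [hy, hp0]
      · rw [if_neg hy, abs_of_nonneg (mul_nonneg (hp0 _) (ind3_nonneg _ _ _))]
        exact mul_le_of_le_one_right (hp0 _) (ind3_le_one _ _ _)
    have e3 : |(if y = a then 0 else
        p (y - b) * (ind (η b) * (1 - ind (η y)) * ind (η a)))| ≤ p (y - b) := by
      by_cases hy : y = a
      · simp [hy, hp0]
      · rw [if_neg hy, abs_of_nonneg (mul_nonneg (hp0 _) (ind3_nonneg _ _ _))]
        exact mul_le_of_le_one_right (hp0 _) (ind3_le_one _ _ _)
    calc ‖H y η‖ ≤ ‖(if y = a ∨ y = b then 0 else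
            p (a - y) * (ind (η y) * (1 - ind (η a)) * ind (η b))
            + p (b - y) * (ind (η y) * (1 - ind (η b)) * ind (η a)))
          - (if y = b then 0 else p (y - a) * (ind (η a) * (1 - ind (η y)) * ind (η b)))‖
          + |(if y = a then 0 else p (y - b) * (ind (η b) * (1 - ind (η y)) * ind (η a)))| :=
          norm_sub_le _ _
      _ ≤ (|(if y = a ∨ y = b then 0 else
            p (a - y) * (ind (η y) * (1 - ind (η a)) * ind (η b))
            + p (b - y) * (ind (η y) * (1 - ind (η b)) * ind (η a)))|
          + |(if y = b then 0 else p (y - a) * (ind (η a) * (1 - ind (η y)) * ind (η b)))|)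
          + |(if y = a then 0 else p (y - b) * (ind (η b) * (1 - ind (η y)) * ind (η a)))| :=
          add_le_add (norm_sub_le _ _) le_rfl
      _ ≤ ((p (a - y) + p (b - y)) + p (y - a)) + p (y - b) :=
          add_le_add (add_le_add e1 e2) e3
      _ = (p (a - y) + p (b - y)) + p (y - a) + p (y - b) := by ring
  have hlint : (∑' y, ∫⁻ η, ‖H y η‖₊ ∂μ) ≠ ⊤ := by
    have h1 : ∀ y : Zd d, ∫⁻ η, ‖H y η‖₊ ∂μ
        ≤ ENNReal.ofReal ((p (a - y) + p (b - y)) + p (y - a) + p (y - b)) :=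
      fun y => lintegral_norm_le (hbound y)
    have h2 := ENNReal.tsum_le_tsum h1
    have h3 : (∑' y : Zd d, ENNReal.ofReal ((p (a - y) + p (b - y)) + p (y - a) + p (y - b)))
        = ENNReal.ofReal (∑' y : Zd d, ((p (a - y) + p (b - y)) + p (y - a) + p (y - b))) :=
      (ENNReal.ofReal_tsum_of_nonneg
        (fun y => add_nonneg (add_nonneg (add_nonneg (hp0 _) (hp0 _)) (hp0 _)) (hp0 _))
        (((hsa1.add hsb1).add hsa2).add hsb2)).symm
    rw [h3] at h2
    exact (lt_of_le_of_lt h2 ENNReal.ofReal_lt_top).ne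
  have h0 : (0:ℝ) = ∑' y, ∫ η, H y η ∂μ := by
    rw [← integral_tsum hmeas hlint, ← integral_congr_ae (Filter.Eventually.of_forall hgenpt),
      hstat f₂ hcyl]
  have hint : ∀ y, ∫ η, H y η ∂μ =
      (if y = a ∨ y = b then 0 else
        p (a - y) * (α y * (1 - α a) * α b) + p (b - y) * (α y * (1 - α b) * α a))
      - (if y = a ∨ y = b then 0 else
        p (y - a) * (α a * (1 - α y) * α b) + p (y - b) * (α b * (1 - α y) * α a)) := by
    intro y
    by_cases hya : y = a
    · subst hya
      have hz : ∀ η, H y η = 0 := fun η => by simp [hH, hab, ind_mul_one_sub]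
      rw [integral_congr_ae (Filter.Eventually.of_forall hz)]
      simp
    · by_cases hyb : y = b
      · subst hyb
        have hz : ∀ η, H y η = 0 := fun η => by simp [hH, Ne.symm hab, ind_mul_one_sub]
        rw [integral_congr_ae (Filter.Eventually.of_forall hz)]
        simp
      · have hyab : ¬(y = a ∨ y = b) := by tauto
        simp only [hH, if_neg hya, if_neg hyb, if_neg hyab]
        have iA : Integrable (fun η : Conf d =>
            p (a - y) * (ind (η y) * (1 - ind (η a)) * ind (η b))) μ :=
          (integrable_three hya hyb hab).const_mul _
        have iB : Integrable (fun η : Conf d =>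
            p (b - y) * (ind (η y) * (1 - ind (η b)) * ind (η a))) μ :=
          (integrable_three hyb hya (Ne.symm hab)).const_mul _
        have iC : Integrable (fun η : Conf d =>
            p (y - a) * (ind (η a) * (1 - ind (η y)) * ind (η b))) μ :=
          (integrable_three (Ne.symm hya) hab hyb).const_mul _
        have iD : Integrable (fun η : Conf d =>
            p (y - b) * (ind (η b) * (1 - ind (η y)) * ind (η a))) μ :=
          (integrable_three (Ne.symm hyb) (Ne.symm hab) hya).const_mul _
        have iAB : Integrable (fun η : Conf d =>
            p (a - y) * (ind (η y) * (1 - ind (η a)) * ind (η b))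
            + p (b - y) * (ind (η y) * (1 - ind (η b)) * ind (η a))) μ := iA.add iB
        have iABC : Integrable (fun η : Conf d =>
            p (a - y) * (ind (η y) * (1 - ind (η a)) * ind (η b))
            + p (b - y) * (ind (η y) * (1 - ind (η b)) * ind (η a))
            - p (y - a) * (ind (η a) * (1 - ind (η y)) * ind (η b))) μ := iAB.sub iC
        rw [integral_sub iABC iD, integral_sub iAB iC,
          integral_add iA iB, integral_const_mul, integral_const_mul, integral_const_mul,
          integral_const_mul, integral_three hμ hα hya hyb hab,
          integral_three hμ hα hyb hya (Ne.symm hab),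
          integral_three hμ hα (Ne.symm hya) hab hyb,
          integral_three hμ hα (Ne.symm hyb) (Ne.symm hab) hya]
        ring
  rw [tsum_congr hint] at h0
  have ha3n : ∀ x y z : Zd d, 0 ≤ α x * (1 - α y) * α z := fun x y z =>
    mul_nonneg (mul_nonneg (hα x).1.le (by linarith [(hα y).2])) (hα z).1.le
  have ha3o : ∀ x y z : Zd d, α x * (1 - α y) * α z ≤ 1 := by
    intro x y z
    have h1 := (hα x).1; have h2 := (hα x).2
    have h3 := (hα y).1; have h4 := (hα y).2
    have h5 := (hα z).1; have h6 := (hα z).2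
    have hx1 : α x * (1 - α y) ≤ 1 := by nlinarith
    nlinarith
  have hLs : Summable (fun y => (if y = a ∨ y = b then 0 else
      p (a - y) * (α y * (1 - α a) * α b) + p (b - y) * (α y * (1 - α b) * α a))) :=
    summable_ite_of_le (hsa1.add hsb1) (fun y => add_nonneg (hp0 _) (hp0 _))
      (fun y _ => add_nonneg (mul_nonneg (hp0 _) (ha3n _ _ _))
        (mul_nonneg (hp0 _) (ha3n _ _ _)))
      (fun y _ => add_le_add (mul_le_of_le_one_right (hp0 _) (ha3o _ _ _))
        (mul_le_of_le_one_right (hp0 _) (ha3o _ _ _)))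
  have hRs : Summable (fun y => (if y = a ∨ y = b then 0 else
      p (y - a) * (α a * (1 - α y) * α b) + p (y - b) * (α b * (1 - α y) * α a))) :=
    summable_ite_of_le (hsa2.add hsb2) (fun y => add_nonneg (hp0 _) (hp0 _))
      (fun y _ => add_nonneg (mul_nonneg (hp0 _) (ha3n _ _ _))
        (mul_nonneg (hp0 _) (ha3n _ _ _)))
      (fun y _ => add_le_add (mul_le_of_le_one_right (hp0 _) (ha3o _ _ _))
        (mul_le_of_le_one_right (hp0 _) (ha3o _ _ _)))
  rw [hLs.tsum_sub hRs] at h0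
  linarith [h0]

lemma tsum_combine {C1 C2 L : Zd d → ℝ} (S1 : Summable C1) (S2 : Summable C2)
    (c1 c2 v1 v2 : ℝ) (a b : Zd d)
    (hkey : ∀ y, L y = (c1 * C1 y + c2 * C2 y)
      - ((if y = b then v1 else 0) + (if y = a then v2 else 0))) :
    ∑' y, L y = (c1 * ∑' y, C1 y + c2 * ∑' y, C2 y) - (v1 + v2) := by
  rw [tsum_congr hkey,
    ((S1.mul_left c1).add (S2.mul_left c2)).tsum_sub
      (((hasSum_ite_eq b v1).summable).add ((hasSum_ite_eq a v2).summable)),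
    (S1.mul_left c1).tsum_add (S2.mul_left c2), tsum_mul_left, tsum_mul_left,
    ((hasSum_ite_eq b v1).summable).tsum_add ((hasSum_ite_eq a v2).summable),
    tsum_ite_eq, tsum_ite_eq]

/-! ### The dichotomy -/

lemma star (hp0 : ∀ z, 0 ≤ p z) (hp1 : ∑' z : Zd d, p z = 1)
    (hα : ∀ x, α x ∈ Set.Ioo (0:ℝ) 1) (hμ : IsProductWith α μ) (hstat : IsStationary p μ)
    (a b : Zd d) (hne : α a ≠ α b) :
    p (b - a) * (α a * (1 - α b)) = p (a - b) * (α b * (1 - α a)) := by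
  classical
  have hab : a ≠ b := fun h => hne (by rw [h])
  have hsump : Summable p := summable_p hp0 hp1
  have hsa1 : Summable fun y : Zd d => p (a - y) := hsump.comp_injective sub_right_injective
  have hsa2 : Summable fun y : Zd d => p (y - a) := hsump.comp_injective sub_left_injective
  have hsb1 : Summable fun y : Zd d => p (b - y) := hsump.comp_injective sub_right_injective
  have hsb2 : Summable fun y : Zd d => p (y - b) := hsump.comp_injective sub_left_injective
  have ha2n : ∀ x y : Zd d, 0 ≤ α x * (1 - α y) := fun x y =>
    mul_nonneg (hα x).1.le (by linarith [(hα y).2])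
  have ha2o : ∀ x y : Zd d, α x * (1 - α y) ≤ 1 := by
    intro x y
    have h1 := (hα x).1; have h2 := (hα x).2
    have h3 := (hα y).1; have h4 := (hα y).2
    nlinarith
  have SCa : Summable (fun y => if y = a then 0 else p (a - y) * (α y * (1 - α a))) :=
    summable_ite_of_le hsa1 (fun y => hp0 _) (fun y _ => mul_nonneg (hp0 _) (ha2n _ _))
      (fun y _ => mul_le_of_le_one_right (hp0 _) (ha2o _ _))
  have SDa : Summable (fun y => if y = a then 0 else p (y - a) * (α a * (1 - α y))) :=
    summable_ite_of_le hsa2 (fun y => hp0 _) (fun y _ => mul_nonneg (hp0 _) (ha2n _ _))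
      (fun y _ => mul_le_of_le_one_right (hp0 _) (ha2o _ _))
  have SCb : Summable (fun y => if y = b then 0 else p (b - y) * (α y * (1 - α b))) :=
    summable_ite_of_le hsb1 (fun y => hp0 _) (fun y _ => mul_nonneg (hp0 _) (ha2n _ _))
      (fun y _ => mul_le_of_le_one_right (hp0 _) (ha2o _ _))
  have SDb : Summable (fun y => if y = b then 0 else p (y - b) * (α b * (1 - α y))) :=
    summable_ite_of_le hsb2 (fun y => hp0 _) (fun y _ => mul_nonneg (hp0 _) (ha2n _ _))
      (fun y _ => mul_le_of_le_one_right (hp0 _) (ha2o _ _))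
  have E1a := eqOne (μ := μ) hp0 hp1 hα hμ hstat a
  have E1b := eqOne (μ := μ) hp0 hp1 hα hμ hstat b
  have E2 := eqTwo (μ := μ) hp0 hp1 hα hμ hstat a b hab
  have keyL : ∀ y, (if y = a ∨ y = b then 0 else
      p (a - y) * (α y * (1 - α a) * α b) + p (b - y) * (α y * (1 - α b) * α a))
      = (α b * (if y = a then 0 else p (a - y) * (α y * (1 - α a)))
          + α a * (if y = b then 0 else p (b - y) * (α y * (1 - α b))))
        - ((if y = b then α b * (p (a - b) * (α b * (1 - α a))) else 0)
          + (if y = a then α a * (p (b - a) * (α a * (1 - α b))) else 0)) := by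
    intro y
    by_cases hya : y = a
    · subst hya
      simp [hab]
    · by_cases hyb : y = b
      · subst hyb
        simp [Ne.symm hab]
      · simp only [if_neg hya, if_neg hyb, if_neg (by tauto : ¬(y = a ∨ y = b))]
        ring
  have keyR : ∀ y, (if y = a ∨ y = b then 0 else
      p (y - a) * (α a * (1 - α y) * α b) + p (y - b) * (α b * (1 - α y) * α a))
      = (α b * (if y = a then 0 else p (y - a) * (α a * (1 - α y)))
          + α a * (if y = b then 0 else p (y - b) * (α b * (1 - α y))))
        - ((if y = b then α b * (p (b - a) * (α a * (1 - α b))) else 0)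
          + (if y = a then α a * (p (a - b) * (α b * (1 - α a))) else 0)) := by
    intro y
    by_cases hya : y = a
    · subst hya
      simp [hab]
    · by_cases hyb : y = b
      · subst hyb
        simp [Ne.symm hab]
      · simp only [if_neg hya, if_neg hyb, if_neg (by tauto : ¬(y = a ∨ y = b))]
        ring
  have hL := tsum_combine SCa SCb (α b) (α a)
    (α b * (p (a - b) * (α b * (1 - α a)))) (α a * (p (b - a) * (α a * (1 - α b)))) a b keyL
  have hR := tsum_combine SDa SDb (α b) (α a)
    (α b * (p (b - a) * (α a * (1 - α b)))) (α a * (p (a - b) * (α b * (1 - α a)))) a b keyR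
  have hkey2 : α b * (p (a - b) * (α b * (1 - α a))) + α a * (p (b - a) * (α a * (1 - α b)))
      = α b * (p (b - a) * (α a * (1 - α b))) + α a * (p (a - b) * (α b * (1 - α a))) := by
    rw [hL, hR] at E2
    rw [E1a, E1b] at E2
    linarith
  have hfac : (α a - α b) * (p (b - a) * (α a * (1 - α b)) - p (a - b) * (α b * (1 - α a)))
      = 0 := by linear_combination hkey2
  rcases mul_eq_zero.mp hfac with h | h
  · exact absurd (sub_eq_zero.mp h) hne
  · linarith [sub_eq_zero.mp h]

/-! ### phi and w -/

lemma pifun_pos (hα : ∀ x, α x ∈ Set.Ioo (0:ℝ) 1) (x : Zd d) : 0 < pifun α x :=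
  div_pos (hα x).1 (by linarith [(hα x).2])

lemma pifun_injective (hα : ∀ x, α x ∈ Set.Ioo (0:ℝ) 1) {x y : Zd d}
    (h : pifun α x = pifun α y) : α x = α y := by
  have h1 := (hα x).1; have h2 := (hα x).2
  have h3 := (hα y).1; have h4 := (hα y).2
  unfold pifun at h
  have d1 : (1:ℝ) - α x ≠ 0 := by linarith
  have d2 : (1:ℝ) - α y ≠ 0 := by linarith
  field_simp at h
  linarith

lemma phi_eq_iff (hα : ∀ x, α x ∈ Set.Ioo (0:ℝ) 1) {x y : Zd d} :
    Real.log (pifun α x) = Real.log (pifun α y) ↔ α x = α y := by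
  constructor
  · intro h
    apply pifun_injective hα
    have := congrArg Real.exp h
    rwa [Real.exp_log (pifun_pos hα x), Real.exp_log (pifun_pos hα y)] at this
  · intro h
    unfold pifun
    rw [h]

lemma flat_one_sided (hp0 : ∀ z, 0 ≤ p z)
    (hstar : ∀ a b : Zd d, α a ≠ α b →
      p (b - a) * (α a * (1 - α b)) = p (a - b) * (α b * (1 - α a)))
    (hα : ∀ x, α x ∈ Set.Ioo (0:ℝ) 1)
    {u : Zd d} (hu : 0 < p u) (hnu : p (-u) = 0) (a : Zd d) : α (a + u) = α a := by
  by_contra hc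
  have h := hstar a (a + u) (fun h => hc h.symm)
  rw [show a + u - a = u by abel, show a - (a + u) = -u by abel, hnu, zero_mul] at h
  have h1 := (hα a).1
  have h2 := (hα (a + u)).2
  nlinarith [mul_pos hu (mul_pos h1 (by linarith : (0:ℝ) < 1 - α (a + u)))]

lemma flat_sym (hp0 : ∀ z, 0 ≤ p z)
    (hstar : ∀ a b : Zd d, α a ≠ α b →
      p (b - a) * (α a * (1 - α b)) = p (a - b) * (α b * (1 - α a)))
    (hα : ∀ x, α x ∈ Set.Ioo (0:ℝ) 1)
    {u : Zd d} (hu : 0 < p u) (hnu : p (-u) = p u) (a : Zd d) : α (a + u) = α a := by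
  by_contra hc
  have h := hstar a (a + u) (fun h => hc h.symm)
  rw [show a + u - a = u by abel, show a - (a + u) = -u by abel, hnu] at h
  have h1 := (hα a).1; have h2 := (hα a).2
  have h3 := (hα (a + u)).1; have h4 := (hα (a + u)).2
  have : α a * (1 - α (a + u)) = α (a + u) * (1 - α a) := by
    have := mul_left_cancel₀ (ne_of_gt hu) h
    linarith [this]
  apply hc
  nlinarith

lemma exp_ratio (hstar : ∀ a b : Zd d, α a ≠ α b →
      p (b - a) * (α a * (1 - α b)) = p (a - b) * (α b * (1 - α a)))
    (hα : ∀ x, α x ∈ Set.Ioo (0:ℝ) 1)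
    {u : Zd d} (hu : 0 < p u) (hnu : 0 < p (-u)) {a : Zd d}
    (hc : α (a + u) ≠ α a) :
    Real.log (pifun α (a + u)) = Real.log (pifun α a) + Real.log (p u / p (-u)) := by
  have h := hstar a (a + u) (fun h => hc h.symm)
  rw [show a + u - a = u by abel, show a - (a + u) = -u by abel] at h
  have h1 := (hα a).1; have h2 := (hα a).2
  have h3 := (hα (a + u)).1; have h4 := (hα (a + u)).2
  have hq : pifun α (a + u) = pifun α a * (p u / p (-u)) := by
    unfold pifun
    rw [div_mul_div_comm]
    rw [div_eq_div_iff (ne_of_gt (by linarith : (0:ℝ) < 1 - α (a + u)))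
      (ne_of_gt (mul_pos (by linarith : (0:ℝ) < 1 - α a) hnu))]
    nlinarith [h]
  rw [hq, Real.log_mul (ne_of_gt (pifun_pos hα a)) (ne_of_gt (div_pos hu hnu))]

lemma log_ratio_ne_zero {x y : ℝ} (hx : 0 < x) (hy : 0 < y) (hxy : x ≠ y) :
    Real.log (x / y) ≠ 0 := by
  intro h
  rcases Real.log_eq_zero.mp h with h' | h' | h'
  · exact absurd h' (ne_of_gt (div_pos hx hy))
  · exact hxy ((div_eq_one_iff_eq (ne_of_gt hy)).mp h')
  · nlinarith [div_pos hx hy]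

noncomputable def wfun {d : ℕ} (p : Zd d → ℝ) (u : Zd d) : ℝ :=
  if 0 < p u ∧ 0 < p (-u) ∧ p u ≠ p (-u) then (p u - p (-u)) / Real.log (p u / p (-u)) else 0

lemma wfun_nonneg (p : Zd d → ℝ) (u : Zd d) : 0 ≤ wfun p u := by
  unfold wfun
  split_ifs with h
  · obtain ⟨h1, h2, h3⟩ := h
    rcases h3.lt_or_gt with hlt | hlt
    · have hlog : Real.log (p u / p (-u)) < 0 :=
        Real.log_neg (div_pos h1 h2) ((div_lt_one h2).2 hlt)
      have hnum : p u - p (-u) < 0 := by linarith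
      exact le_of_lt (div_pos_of_neg_of_neg hnum hlog)
    · have hlog : 0 < Real.log (p u / p (-u)) :=
        Real.log_pos ((one_lt_div h2).2 hlt)
      have hnum : 0 < p u - p (-u) := by linarith
      exact le_of_lt (div_pos hnum hlog)
  · exact le_refl 0

lemma wfun_neg_arg (p : Zd d → ℝ) (u : Zd d) : wfun p (-u) = wfun p u := by
  unfold wfun
  rw [neg_neg]
  by_cases h : 0 < p u ∧ 0 < p (-u) ∧ p u ≠ p (-u)
  · rw [if_pos ⟨h.2.1, h.1, Ne.symm h.2.2⟩, if_pos h]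
    have e : Real.log (p (-u) / p u) = - Real.log (p u / p (-u)) := by
      rw [← Real.log_inv]
      congr 1
      rw [inv_div]
    rw [e, show p (-u) - p u = -(p u - p (-u)) by ring, neg_div_neg_eq]
  · rw [if_neg h, if_neg (fun hc => h ⟨hc.2.1, hc.1, Ne.symm hc.2.2⟩)]

lemma logmean_le {x y : ℝ} (hx : 0 < x) (hy : 0 < y) (hxy : y < x) :
    (x - y) / Real.log (x / y) ≤ x := by
  have hlog : 0 < Real.log (x / y) := Real.log_pos ((one_lt_div hy).2 hxy)
  rw [div_le_iff₀ hlog]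
  have h1 : Real.log (y / x) ≤ y / x - 1 := Real.log_le_sub_one_of_pos (div_pos hy hx)
  have e : Real.log (y / x) = - Real.log (x / y) := by
    rw [← Real.log_inv]; congr 1; rw [inv_div]
  rw [e] at h1
  have h2 : - (x * Real.log (x / y)) ≤ x * (y / x - 1) := by
    have := mul_le_mul_of_nonneg_left h1 hx.le
    linarith [this]
  have h3 : x * (y / x - 1) = y - x := by field_simp
  linarith [h2, h3.le]

lemma wfun_le (hp0 : ∀ z, 0 ≤ p z) (u : Zd d) : wfun p u ≤ p u + p (-u) := by
  unfold wfun
  split_ifs with h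
  · obtain ⟨h1, h2, h3⟩ := h
    rcases h3.lt_or_gt with hlt | hlt
    · have e : Real.log (p u / p (-u)) = - Real.log (p (-u) / p u) := by
        rw [← Real.log_inv]; congr 1; rw [inv_div]
      rw [e, show p u - p (-u) = -(p (-u) - p u) by ring, neg_div_neg_eq]
      calc (p (-u) - p u) / Real.log (p (-u) / p u) ≤ p (-u) := logmean_le h2 h1 hlt
        _ ≤ p u + p (-u) := by linarith
    · calc (p u - p (-u)) / Real.log (p u / p (-u)) ≤ p u := logmean_le h1 h2 hlt
        _ ≤ p u + p (-u) := by linarith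
  · exact add_nonneg (hp0 _) (hp0 _)

/-! ### Harmonicity -/

lemma harmonic (hp0 : ∀ z, 0 ≤ p z) (hp1 : ∑' z : Zd d, p z = 1)
    (hα : ∀ x, α x ∈ Set.Ioo (0:ℝ) 1)
    (hOne : ∀ a : Zd d, ∑' y : Zd d, (if y = a then 0 else p (a - y) * (α y * (1 - α a))) =
      ∑' y : Zd d, (if y = a then 0 else p (y - a) * (α a * (1 - α y))))
    (hstar : ∀ a b : Zd d, α a ≠ α b →
      p (b - a) * (α a * (1 - α b)) = p (a - b) * (α b * (1 - α a)))
    (a : Zd d) :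
    Summable (fun u => wfun p u * (Real.log (pifun α (a + u)) - Real.log (pifun α a))) ∧
    ∑' u, wfun p u * (Real.log (pifun α (a + u)) - Real.log (pifun α a)) = 0 := by
  classical
  have hsump : Summable p := summable_p hp0 hp1
  have hs1 : Summable fun y : Zd d => p (a - y) := hsump.comp_injective sub_right_injective
  have hs2 : Summable fun y : Zd d => p (y - a) := hsump.comp_injective sub_left_injective
  have ha2n : ∀ x y : Zd d, 0 ≤ α x * (1 - α y) := fun x y =>
    mul_nonneg (hα x).1.le (by linarith [(hα y).2])
  have ha2o : ∀ x y : Zd d, α x * (1 - α y) ≤ 1 := by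
    intro x y
    have h1 := (hα x).1; have h2 := (hα x).2
    have h3 := (hα y).1; have h4 := (hα y).2
    nlinarith
  have SFa : Summable (fun y => p (a - y) * (α y * (1 - α a))) :=
    Summable.of_nonneg_of_le (fun y => mul_nonneg (hp0 _) (ha2n _ _))
      (fun y => mul_le_of_le_one_right (hp0 _) (ha2o _ _)) hs1
  have SGa : Summable (fun y => p (y - a) * (α a * (1 - α y))) :=
    Summable.of_nonneg_of_le (fun y => mul_nonneg (hp0 _) (ha2n _ _))
      (fun y => mul_le_of_le_one_right (hp0 _) (ha2o _ _)) hs2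
  have hfull : ∑' y, p (a - y) * (α y * (1 - α a)) = ∑' y, p (y - a) * (α a * (1 - α y)) := by
    rw [SFa.tsum_eq_add_tsum_ite a, SGa.tsum_eq_add_tsum_ite a, hOne a]
  have hL2 : ∑' u : Zd d, p (-u) * (α (a + u) * (1 - α a))
      = ∑' y, p (a - y) * (α y * (1 - α a)) := by
    rw [← (Equiv.addLeft a).tsum_eq (fun y => p (a - y) * (α y * (1 - α a)))]
    apply tsum_congr; intro u
    have h : (Equiv.addLeft a) u = a + u := rfl
    rw [h, show a - (a + u) = -u by abel]
  have hR2 : ∑' u : Zd d, p u * (α a * (1 - α (a + u)))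
      = ∑' y, p (y - a) * (α a * (1 - α y)) := by
    rw [← (Equiv.addLeft a).tsum_eq (fun y => p (y - a) * (α a * (1 - α y)))]
    apply tsum_congr; intro u
    have h : (Equiv.addLeft a) u = a + u := rfl
    rw [h, show a + u - a = u by abel]
  have SL2 : Summable (fun u : Zd d => p (-u) * (α (a + u) * (1 - α a))) := by
    have h := ((Equiv.addLeft a).summable_iff
      (f := fun y => p (a - y) * (α y * (1 - α a)))).2 SFa
    apply h.congr
    intro u
    have hc : (Equiv.addLeft a) u = a + u := rfl
    simp only [Function.comp_apply, hc]
    rw [show a - (a + u) = -u by abel]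
  have SR2 : Summable (fun u : Zd d => p u * (α a * (1 - α (a + u)))) := by
    have h := ((Equiv.addLeft a).summable_iff
      (f := fun y => p (y - a) * (α a * (1 - α y)))).2 SGa
    apply h.congr
    intro u
    have hc : (Equiv.addLeft a) u = a + u := rfl
    simp only [Function.comp_apply, hc]
    rw [show a + u - a = u by abel]
  have key : ∀ u : Zd d, p (-u) * (α (a + u) * (1 - α a)) - p u * (α a * (1 - α (a + u)))
      = (1 - α a) * (α a * (p (-u) - p u)
        + α a * (wfun p u * (Real.log (pifun α (a + u)) - Real.log (pifun α a)))) := by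
    intro u
    by_cases hcond : 0 < p u ∧ 0 < p (-u) ∧ p u ≠ p (-u)
    · obtain ⟨h1, h2, h3⟩ := hcond
      by_cases hc : α (a + u) = α a
      · have hφ : Real.log (pifun α (a + u)) = Real.log (pifun α a) := (phi_eq_iff hα).2 hc
        rw [hφ, hc, wfun, if_pos ⟨h1, h2, h3⟩]
        ring
      · have hφ := exp_ratio hstar hα h1 h2 hc
        have hstar' := hstar a (a + u) (fun h => hc h.symm)
        rw [show a + u - a = u by abel, show a - (a + u) = -u by abel] at hstar'
        have hlog := log_ratio_ne_zero h1 h2 h3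
        rw [wfun, if_pos ⟨h1, h2, h3⟩, hφ]
        have hcan : (p u - p (-u)) / Real.log (p u / p (-u))
            * (Real.log (pifun α a) + Real.log (p u / p (-u)) - Real.log (pifun α a))
            = p u - p (-u) := by
          rw [show (Real.log (pifun α a) + Real.log (p u / p (-u)) - Real.log (pifun α a))
            = Real.log (p u / p (-u)) by ring, div_mul_cancel₀ _ hlog]
        rw [hcan]
        linarith [hstar']
    · rw [wfun, if_neg hcond]
      by_cases h1 : 0 < p u
      · by_cases h2 : 0 < p (-u)
        · have h3 : p u = p (-u) := by
            by_contra hne; exact hcond ⟨h1, h2, hne⟩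
          have hflat : α (a + u) = α a := flat_sym hp0 hstar hα h1 h3.symm a
          rw [hflat, h3]; ring
        · have h2' : p (-u) = 0 := le_antisymm (not_lt.mp h2) (hp0 _)
          have hflat : α (a + u) = α a := flat_one_sided hp0 hstar hα h1 h2' a
          rw [hflat, h2']; ring
      · have h1' : p u = 0 := le_antisymm (not_lt.mp h1) (hp0 _)
        by_cases h2 : 0 < p (-u)
        · have hflat : α ((a + u) + -u) = α (a + u) :=
            flat_one_sided hp0 hstar hα h2 (by rw [neg_neg]; exact h1') (a + u)
          rw [show (a + u) + -u = a by abel] at hflat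
          rw [← hflat, h1']; ring
        · have h2' : p (-u) = 0 := le_antisymm (not_lt.mp h2) (hp0 _)
          rw [h1', h2']; ring
  have hane : ((1:ℝ) - α a) ≠ 0 := by linarith [(hα a).2]
  have hane2 : α a ≠ 0 := ne_of_gt (hα a).1
  have Sdiff : Summable (fun u => p (-u) * (α (a + u) * (1 - α a))
      - p u * (α a * (1 - α (a + u)))) := SL2.sub SR2
  have Sneg : Summable (fun u : Zd d => p (-u)) := hsump.comp_injective neg_injective
  have hrho_eq : ∀ u, wfun p u * (Real.log (pifun α (a + u)) - Real.log (pifun α a))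
      = (p (-u) * (α (a + u) * (1 - α a)) - p u * (α a * (1 - α (a + u))))
          / ((1 - α a) * α a) - (p (-u) - p u) := by
    intro u
    rw [key u]
    field_simp
    ring
  have Srho : Summable (fun u => wfun p u
      * (Real.log (pifun α (a + u)) - Real.log (pifun α a))) := by
    have h := (Sdiff.div_const ((1 - α a) * α a)).sub (Sneg.sub hsump)
    exact h.congr (fun u => (hrho_eq u).symm)
  have hzero : ∑' u, (p (-u) * (α (a + u) * (1 - α a)) - p u * (α a * (1 - α (a + u)))) = 0 := by
    rw [SL2.tsum_sub SR2, hL2, hR2, hfull, sub_self]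
  have hpneg : ∑' u : Zd d, p (-u) = ∑' u, p u := by
    rw [← (Equiv.neg (Zd d)).tsum_eq p]
    apply tsum_congr
    intro u
    rfl
  refine ⟨Srho, ?_⟩
  rw [tsum_congr hrho_eq, (Sdiff.div_const _).tsum_sub (Sneg.sub hsump), tsum_div_const,
    hzero, Sneg.tsum_sub hsump, hpneg, sub_self, zero_div, sub_self]

lemma wfun_pos {u : Zd d} (h : 0 < p u ∧ 0 < p (-u) ∧ p u ≠ p (-u)) : 0 < wfun p u := by
  obtain ⟨h1, h2, h3⟩ := h
  rw [wfun, if_pos ⟨h1, h2, h3⟩]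
  rcases h3.lt_or_gt with hlt | hlt
  · have hlog : Real.log (p u / p (-u)) < 0 :=
      Real.log_neg (div_pos h1 h2) ((div_lt_one h2).2 hlt)
    exact div_pos_of_neg_of_neg (by linarith) hlog
  · exact div_pos (by linarith) (Real.log_pos ((one_lt_div h2).2 hlt))

/-! ### Constancy of increments -/

lemma step_const (hp0 : ∀ z, 0 ≤ p z) (hp1 : ∑' z : Zd d, p z = 1)
    (hα : ∀ x, α x ∈ Set.Ioo (0:ℝ) 1)
    (hOne : ∀ a : Zd d, ∑' y : Zd d, (if y = a then 0 else p (a - y) * (α y * (1 - α a))) =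
      ∑' y : Zd d, (if y = a then 0 else p (y - a) * (α a * (1 - α y))))
    (hstar : ∀ a b : Zd d, α a ≠ α b →
      p (b - a) * (α a * (1 - α b)) = p (a - b) * (α b * (1 - α a)))
    {z : Zd d} (hz : 0 < wfun p z) (a u : Zd d) (hu : 0 < wfun p u) :
    Real.log (pifun α ((a + u) + z)) - Real.log (pifun α (a + u))
      = Real.log (pifun α (a + z)) - Real.log (pifun α a) := by
  classical
  set φ : Zd d → ℝ := fun x => Real.log (pifun α x) with hφ
  have hcz : 0 < p z ∧ 0 < p (-z) ∧ p z ≠ p (-z) := by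
    by_contra h
    rw [wfun, if_neg h] at hz
    exact lt_irrefl 0 hz
  obtain ⟨hz1, hz2, hz3⟩ := hcz
  set c := Real.log (p z / p (-z)) with hc
  have hcne : c ≠ 0 := log_ratio_ne_zero hz1 hz2 hz3
  have hdich : ∀ b : Zd d, φ (b + z) = φ b ∨ φ (b + z) = φ b + c := by
    intro b
    by_cases h : α (b + z) = α b
    · left; exact (phi_eq_iff hα).2 h
    · right; exact exp_ratio hstar hα hz1 hz2 h
  set e : Zd d → ℝ := fun b => if φ (b + z) = φ b then 0 else 1 with he
  have hee : ∀ b, φ (b + z) - φ b = c * e b := by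
    intro b
    rcases hdich b with h | h
    · have h0 : e b = 0 := by simp only [he]; exact if_pos h
      rw [h0, mul_zero, h, sub_self]
    · have hne : φ (b + z) ≠ φ b := by
        rw [h]
        intro hh
        exact hcne (by linarith)
      have h1 : e b = 1 := by simp only [he]; exact if_neg hne
      rw [h1, mul_one]
      linarith [h]
  have he01 : ∀ b, e b = 0 ∨ e b = 1 := fun b => by
    simp only [he]; split_ifs <;> simp
  have Ha := harmonic hp0 hp1 hα hOne hstar a
  have Haz := harmonic hp0 hp1 hα hOne hstar (a + z)
  have hterm : ∀ v : Zd d, wfun p v * c * (e (a + v) - e a)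
      = wfun p v * (φ ((a + z) + v) - φ (a + z)) - wfun p v * (φ (a + v) - φ a) := by
    intro v
    have h1 := hee (a + v)
    have h2 := hee a
    have h1' : φ ((a + v) + z) = φ (a + v) + c * e (a + v) := by linarith [h1]
    have h2' : φ (a + z) = φ a + c * e a := by linarith [h2]
    rw [show (a + z) + v = (a + v) + z by abel, h1', h2']
    ring
  have hsum : Summable (fun v => wfun p v * c * (e (a + v) - e a)) :=
    ((Haz.1).sub (Ha.1)).congr (fun v => (hterm v).symm)
  have hzero : ∑' v, wfun p v * c * (e (a + v) - e a) = 0 := by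
    rw [tsum_congr hterm, Haz.1.tsum_sub Ha.1, Haz.2, Ha.2, sub_self]
  have hsum2 : Summable (fun v => wfun p v * (e (a + v) - e a)) := by
    have h := hsum.div_const c
    apply h.congr
    intro v
    field_simp
  have hzero2 : ∑' v, wfun p v * (e (a + v) - e a) = 0 := by
    have hmm : ∑' v, wfun p v * c * (e (a + v) - e a)
        = c * ∑' v, wfun p v * (e (a + v) - e a) := by
      rw [← tsum_mul_left]
      apply tsum_congr
      intro v
      ring
    rw [hmm] at hzero
    exact (mul_eq_zero.mp hzero).resolve_left hcne
  have heq : e (a + u) = e a := by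
    rcases he01 a with h0 | h1
    · have hterm0 : ∀ v, 0 ≤ wfun p v * (e (a + v) - e a) := by
        intro v
        apply mul_nonneg (wfun_nonneg p v)
        rw [h0, sub_zero]
        rcases he01 (a + v) with h | h <;> rw [h] <;> norm_num
      have hle := hsum2.le_tsum u (fun j _ => hterm0 j)
      rw [hzero2] at hle
      have hz0 : wfun p u * (e (a + u) - e a) = 0 := le_antisymm hle (hterm0 u)
      rcases mul_eq_zero.mp hz0 with h | h
      · exact absurd h (ne_of_gt hu)
      · linarith [h]
    · have hsum3 : Summable (fun v => wfun p v * (e a - e (a + v))) := by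
        apply hsum2.neg.congr
        intro v
        show -(wfun p v * (e (a + v) - e a)) = _
        ring
      have hzero3 : ∑' v, wfun p v * (e a - e (a + v)) = 0 := by
        have hfe : (fun v => wfun p v * (e a - e (a + v)))
            = fun v => -(wfun p v * (e (a + v) - e a)) := funext fun v => by ring
        rw [hfe, tsum_neg, hzero2, neg_zero]
      have hterm1 : ∀ v, 0 ≤ wfun p v * (e a - e (a + v)) := by
        intro v
        apply mul_nonneg (wfun_nonneg p v)
        rw [h1]
        rcases he01 (a + v) with h | h <;> rw [h] <;> norm_num
      have hle := hsum3.le_tsum u (fun j _ => hterm1 j)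
      rw [hzero3] at hle
      have hz0 : wfun p u * (e a - e (a + u)) = 0 := le_antisymm hle (hterm1 u)
      rcases mul_eq_zero.mp hz0 with h | h
      · exact absurd h (ne_of_gt hu)
      · linarith [h]
  calc φ ((a + u) + z) - φ (a + u) = c * e (a + u) := hee (a + u)
    _ = c * e a := by rw [heq]
    _ = φ (a + z) - φ a := (hee a).symm

end Main

theorem stationary_product_is_exponential {d : ℕ} (p : Zd d → ℝ)
    (hp0 : ∀ z, 0 ≤ p z) (hp1 : ∑' z : Zd d, p z = 1)
    (hgen : ∀ H : AddSubgroup (Zd d), (∀ u : Zd d, 0 < p u → u ∈ H) → H = ⊤)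
    (α : Zd d → ℝ) (hα : ∀ x, α x ∈ Set.Ioo (0 : ℝ) 1)
    (μ : Measure (Conf d)) (hμ : IsProductWith α μ) (hstat : IsStationary p μ) :
    ∃ v : Fin d → ℝ, ∀ x : Zd d, pifun α x = pifun α 0 * Real.exp (innerR x v) := by
  classical
  have hstar : ∀ a b : Zd d, α a ≠ α b →
      p (b - a) * (α a * (1 - α b)) = p (a - b) * (α b * (1 - α a)) :=
    fun a b hne => star hp0 hp1 hα hμ hstat a b hne
  have hOne : ∀ a : Zd d, ∑' y : Zd d, (if y = a then 0 else p (a - y) * (α y * (1 - α a))) =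
      ∑' y : Zd d, (if y = a then 0 else p (y - a) * (α a * (1 - α y))) :=
    fun a => eqOne hp0 hp1 hα hμ hstat a
  set φ : Zd d → ℝ := fun x => Real.log (pifun α x) with hφ
  -- directions with vanishing w are flat
  have hflat : ∀ u : Zd d, 0 < p u → ¬ (0 < wfun p u) → ∀ b : Zd d, φ (b + u) = φ b := by
    intro u hu hw b
    have hcond : ¬(0 < p u ∧ 0 < p (-u) ∧ p u ≠ p (-u)) := fun h => hw (wfun_pos h)
    by_cases h2 : 0 < p (-u)
    · have h3 : p u = p (-u) := by
        by_contra hne; exact hcond ⟨hu, h2, hne⟩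
      exact (phi_eq_iff hα).2 (flat_sym hp0 hstar hα hu h3.symm b)
    · have h2' : p (-u) = 0 := le_antisymm (not_lt.mp h2) (hp0 _)
      exact (phi_eq_iff hα).2 (flat_one_sided hp0 hstar hα hu h2' b)
  -- every p-positive direction has constant increments
  have hK : ∀ u : Zd d, 0 < p u → ∀ b : Zd d, φ (b + u) - φ b = φ u - φ 0 := by
    intro u hpu
    by_cases hwu : 0 < wfun p u
    · set Inv : AddSubgroup (Zd d) :=
        { carrier := {t | ∀ b : Zd d, φ ((b + t) + u) - φ (b + t) = φ (b + u) - φ b}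
          zero_mem' := by
            intro b
            simp
          add_mem' := by
            intro t s ht hs b
            rw [show b + (t + s) = (b + t) + s by abel]
            exact (hs (b + t)).trans (ht b)
          neg_mem' := by
            intro t ht b
            have h := ht (b + -t)
            rw [show (b + -t) + t = b by abel] at h
            exact h.symm } with hInv
      have hSub : ∀ t : Zd d, 0 < p t → t ∈ Inv := by
        intro t hpt
        by_cases hwt : 0 < wfun p t
        · intro b
          exact step_const hp0 hp1 hα hOne hstar hwu b t hwt
        · intro b
          have h1 : φ (b + t) = φ b := hflat t hpt hwt b
          have h2 : φ ((b + u) + t) = φ (b + u) := hflat t hpt hwt (b + u)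
          rw [show (b + t) + u = (b + u) + t by abel, h2, h1]
      have htop : Inv = ⊤ := hgen Inv hSub
      intro b
      have hmem : b ∈ Inv := by rw [htop]; trivial
      have h := hmem 0
      simpa using h
    · intro b
      have h1 : φ (b + u) = φ b := hflat u hpu hwu b
      have h2 : φ (0 + u) = φ 0 := hflat u hpu hwu 0
      rw [zero_add] at h2
      rw [h1, h2, sub_self, sub_self]
  set K : AddSubgroup (Zd d) :=
    { carrier := {u | ∀ b : Zd d, φ (b + u) - φ b = φ u - φ 0}
      zero_mem' := by
        intro b
        simp
      add_mem' := by
        intro x y hx hy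
        have h1 : ∀ b : Zd d, φ (b + (x + y)) - φ b = (φ x - φ 0) + (φ y - φ 0) := by
          intro b
          have hxx := hx (b + y)
          have hyy := hy b
          rw [show b + (x + y) = (b + y) + x by abel]
          linarith
        intro b
        have h0 := h1 0
        rw [zero_add] at h0
        rw [h1 b, h0]
      neg_mem' := by
        intro x hx
        have h0 := hx (-x)
        rw [show -x + x = (0 : Zd d) by abel] at h0
        intro b
        have h := hx (b + -x)
        rw [show (b + -x) + x = b by abel] at h
        linarith } with hKdef
  have htopK : K = ⊤ := hgen K (fun u hu => hK u hu)
  have hadd : ∀ x y : Zd d, φ (x + y) - φ 0 = (φ x - φ 0) + (φ y - φ 0) := by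
    intro x y
    have hx : x ∈ K := by rw [htopK]; trivial
    have h := hx y
    rw [show y + x = x + y by abel] at h
    linarith
  set ψ : Zd d →+ ℝ := AddMonoidHom.mk' (fun x => φ x - φ 0)
    (fun x y => by simpa using hadd x y) with hψ
  refine ⟨fun i => ψ (Pi.single i 1), ?_⟩
  intro x
  have hx : ψ x = innerR x (fun i => ψ (Pi.single i 1)) := by
    calc ψ x = ψ (∑ i : Fin d, Pi.single i (x i)) := by rw [Finset.univ_sum_single x]
      _ = ∑ i : Fin d, ψ (Pi.single i (x i)) := map_sum ψ _ _
      _ = ∑ i : Fin d, (x i : ℝ) * ψ (Pi.single i 1) := by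
          apply Finset.sum_congr rfl
          intro i _
          have hsingle : (Pi.single i (x i) : Zd d) = (x i) • (Pi.single i 1 : Zd d) := by
            ext j
            by_cases h : j = i <;> simp [Pi.single_apply, h]
          rw [hsingle, map_zsmul, zsmul_eq_mul]
      _ = innerR x (fun i => ψ (Pi.single i 1)) := rfl
  have hψx : ψ x = φ x - φ 0 := rfl
  have hval : pifun α x = Real.exp (φ x) := (Real.exp_log (pifun_pos hα x)).symm
  have hval0 : pifun α 0 = Real.exp (φ 0) := (Real.exp_log (pifun_pos hα 0)).symm
  rw [hval, hval0, ← Real.exp_add, ← hx, hψx]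
  congr 1
  ring

end ExclusionPaper
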